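/- arXiv:2003.01239 — 2 statements merged into one kernel-verified Lean document; each statement's English description precedes it below -/
import Mathlib

section
/- Let f be (μ,ρ)-strongly concave on a region containing θ, θ+σg*, θ+σg', where ‖g*‖=‖g'‖=√d. Suppose f(θ+σg*) ≥ f(θ+σg') - 2Λ, and the angle between g' and v=∇f(θ) is β₂ while the angle between g* and v is β₁, with cos(β₂) - cos(β₁) ≥ τ > 0. Then ‖v‖ ≤ ((ρ-μ)/(2τ))·√d·σ + 2Λ/(στ√d). -/
set_option maxHeartbeats 800000


theorem gradient_norm_bound_of_hill_climbing
    (d : ℕ) (f : EuclideanSpace ℝ (Fin d) → ℝ)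
    (B : Set (EuclideanSpace ℝ (Fin d))) (hB : IsOpen B) (hBc : Convex ℝ B)
    (θ gstar g' : EuclideanSpace ℝ (Fin d))
    (σ Λ μ ρ τ : ℝ) (hσ : 0 < σ) (hΛ : 0 ≤ Λ) (hμ : 0 < μ) (hμρ : μ < ρ) (hτ : 0 < τ)
    (hf : Differentiable ℝ f)
    (hθ : θ ∈ B) (hθg : θ + σ • gstar ∈ B) (hθg' : θ + σ • g' ∈ B)
    (hng : ‖gstar‖ = Real.sqrt d) (hng' : ‖g'‖ = Real.sqrt d)
    (v : EuclideanSpace ℝ (Fin d)) (hv : v = gradient f θ) (hv0 : v ≠ 0)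
    (hupper : ∀ x ∈ B, ∀ y ∈ B,
      f y ≤ f x + inner ℝ (gradient f x) (y - x) - μ / 2 * ‖y - x‖ ^ 2)
    (hlower : ∀ x ∈ B, ∀ y ∈ B,
      f y ≥ f x + inner ℝ (gradient f x) (y - x) - ρ / 2 * ‖y - x‖ ^ 2)
    (hmax : f (θ + σ • gstar) ≥ f (θ + σ • g') - 2 * Λ)
    (hangle : (inner ℝ g' v : ℝ) / (‖g'‖ * ‖v‖) - (inner ℝ gstar v : ℝ) / (‖gstar‖ * ‖v‖) ≥ τ) :
    ‖v‖ ≤ (ρ - μ) / (2 * τ) * Real.sqrt d * σ + 2 * Λ / (σ * τ * Real.sqrt d) := by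
  have hd : 0 < d := by
    rcases Nat.eq_zero_or_pos d with h | h
    · exfalso; apply hv0; subst h
      exact Subsingleton.elim v 0
    · exact h
  set s : ℝ := Real.sqrt d with hs
  have hs0 : 0 < s := Real.sqrt_pos.mpr (by exact_mod_cast hd)
  have hss : s * s = (d : ℝ) := Real.mul_self_sqrt (by positivity)
  have hv0' : 0 < ‖v‖ := norm_pos_iff.mpr hv0
  -- strong concavity bounds
  have h1 := hupper θ hθ (θ + σ • gstar) hθg
  have h2 := hlower θ hθ (θ + σ • g') hθg'
  rw [add_sub_cancel_left] at h1 h2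
  rw [← hv] at h1 h2
  have hn1 : ‖σ • gstar‖ ^ 2 = σ ^ 2 * (d : ℝ) := by
    rw [norm_smul, hng, Real.norm_eq_abs, abs_of_pos hσ, mul_pow, ← hss]; ring
  have hn2 : ‖σ • g'‖ ^ 2 = σ ^ 2 * (d : ℝ) := by
    rw [norm_smul, hng', Real.norm_eq_abs, abs_of_pos hσ, mul_pow, ← hss]; ring
  have hi1 : (inner ℝ v (σ • gstar) : ℝ) = σ * inner ℝ v gstar := real_inner_smul_right v gstar σ
  have hi2 : (inner ℝ v (σ • g') : ℝ) = σ * inner ℝ v g' := real_inner_smul_right v g' σ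
  rw [hn1, hi1] at h1
  rw [hn2, hi2] at h2
  -- angle bound
  have hden : 0 < s * ‖v‖ := by positivity
  have hang : (inner ℝ g' v : ℝ) - inner ℝ gstar v ≥ τ * (s * ‖v‖) := by
    rw [hng, hng', div_sub_div_same] at hangle
    calc τ * (s * ‖v‖) ≤ ((inner ℝ g' v : ℝ) - inner ℝ gstar v) / (s * ‖v‖) * (s * ‖v‖) := by
          apply mul_le_mul_of_nonneg_right hangle (le_of_lt hden)
      _ = (inner ℝ g' v : ℝ) - inner ℝ gstar v := div_mul_cancel₀ _ (ne_of_gt hden)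
  have hc1 : (inner ℝ g' v : ℝ) = inner ℝ v g' := real_inner_comm v g'
  have hc2 : (inner ℝ gstar v : ℝ) = inner ℝ v gstar := real_inner_comm v gstar
  -- combine
  have key : σ * τ * s * ‖v‖ ≤ (ρ - μ) / 2 * σ ^ 2 * (d : ℝ) + 2 * Λ := by
    nlinarith [hang, h1, h2, hmax, hc1, hc2]
  have hpos : 0 < σ * τ * s := by positivity
  rw [← mul_le_mul_iff_of_pos_right hpos]
  have heq : ((ρ - μ) / (2 * τ) * s * σ + 2 * Λ / (σ * τ * s)) * (σ * τ * s)
      = (ρ - μ) / 2 * σ ^ 2 * (s * s) + 2 * Λ := by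
    field_simp
  rw [heq, hss]
  nlinarith [key]
end

section
/- For all φ with 0 ≤ φ ≤ 1, cos(φ) - cos(2φ) ≥ (3/2)φ² - (5/8)φ⁴. -/
open Real

private lemma sub_cube_le_sin (x : ℝ) (hx : 0 ≤ x) : x - x ^ 3 / 6 ≤ Real.sin x := by
  have mono : MonotoneOn (fun t : ℝ => Real.sin t - (t - t ^ 3 / 6)) (Set.Ici 0) := by
    apply monotoneOn_of_deriv_nonneg (convex_Ici 0)
    · fun_prop
    · fun_prop
    · intro y hy
      have hd : HasDerivAt (fun t : ℝ => Real.sin t - (t - t ^ 3 / 6))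
          (Real.cos y - (1 - 3 * y ^ 2 / 6)) y := by
        have h1 := (Real.hasDerivAt_sin y).sub
          ((hasDerivAt_id y).sub ((hasDerivAt_pow 3 y).div_const 6))
        simp at h1; exact h1
      rw [hd.deriv]
      have := Real.one_sub_sq_div_two_le_cos (x := y)
      nlinarith
  have h0 : (fun t : ℝ => Real.sin t - (t - t ^ 3 / 6)) 0 = 0 := by simp
  have := mono (Set.self_mem_Ici) (Set.mem_Ici.2 hx) hx
  simp only [h0] at this
  linarith [this]

private lemma cos_le_quartic (x : ℝ) (hx : 0 ≤ x) :
    Real.cos x ≤ 1 - x ^ 2 / 2 + x ^ 4 / 24 := by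
  have mono : MonotoneOn (fun t : ℝ => (1 - t ^ 2 / 2 + t ^ 4 / 24) - Real.cos t)
      (Set.Ici 0) := by
    apply monotoneOn_of_deriv_nonneg (convex_Ici 0)
    · fun_prop
    · fun_prop
    · intro y hy
      rw [interior_Ici, Set.mem_Ioi] at hy
      have hd : HasDerivAt (fun t : ℝ => (1 - t ^ 2 / 2 + t ^ 4 / 24) - Real.cos t)
          ((0 - 2 * y / 2 + 4 * y ^ 3 / 24) - (-Real.sin y)) y := by
        have h1 := (((hasDerivAt_const y (1:ℝ)).sub ((hasDerivAt_pow 2 y).div_const 2)).add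
          ((hasDerivAt_pow 4 y).div_const 24)).sub (Real.hasDerivAt_cos y)
        simp at h1 ⊢; exact h1
      rw [hd.deriv]
      have := sub_cube_le_sin y hy.le
      nlinarith
  have := mono (Set.self_mem_Ici) (Set.mem_Ici.2 hx) hx
  simp only [Real.cos_zero] at this
  nlinarith [this]

private lemma sextic_le_cos (x : ℝ) (hx : 0 ≤ x) :
    1 - x ^ 2 / 2 + x ^ 4 / 24 - x ^ 6 / 720 ≤ Real.cos x := by
  have sinle : ∀ y : ℝ, 0 ≤ y → Real.sin y ≤ y - y ^ 3 / 6 + y ^ 5 / 120 := by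
    intro z hz
    have mono : MonotoneOn (fun t : ℝ => (t - t ^ 3 / 6 + t ^ 5 / 120) - Real.sin t)
        (Set.Ici 0) := by
      apply monotoneOn_of_deriv_nonneg (convex_Ici 0)
      · fun_prop
      · fun_prop
      · intro y hy
        rw [interior_Ici, Set.mem_Ioi] at hy
        have hd : HasDerivAt (fun t : ℝ => (t - t ^ 3 / 6 + t ^ 5 / 120) - Real.sin t)
            ((1 - 3 * y ^ 2 / 6 + 5 * y ^ 4 / 120) - Real.cos y) y := by
          have h1 := (((hasDerivAt_id y).sub ((hasDerivAt_pow 3 y).div_const 6)).add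
            ((hasDerivAt_pow 5 y).div_const 120)).sub (Real.hasDerivAt_sin y)
          simp at h1; exact h1
        rw [hd.deriv]
        have := cos_le_quartic y hy.le
        nlinarith
    have := mono (Set.self_mem_Ici) (Set.mem_Ici.2 hz) hz
    simp only [Real.sin_zero] at this
    nlinarith [this]
  have mono : MonotoneOn (fun t : ℝ => Real.cos t - (1 - t ^ 2 / 2 + t ^ 4 / 24 - t ^ 6 / 720))
      (Set.Ici 0) := by
    apply monotoneOn_of_deriv_nonneg (convex_Ici 0)
    · fun_prop
    · fun_prop
    · intro y hy
      rw [interior_Ici, Set.mem_Ioi] at hy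
      have hd : HasDerivAt (fun t : ℝ => Real.cos t - (1 - t ^ 2 / 2 + t ^ 4 / 24 - t ^ 6 / 720))
          (-Real.sin y - (0 - 2 * y / 2 + 4 * y ^ 3 / 24 - 6 * y ^ 5 / 720)) y := by
        have h1 := (Real.hasDerivAt_cos y).sub
          ((((hasDerivAt_const y (1:ℝ)).sub ((hasDerivAt_pow 2 y).div_const 2)).add
            ((hasDerivAt_pow 4 y).div_const 24)).sub ((hasDerivAt_pow 6 y).div_const 720))
        simp at h1 ⊢; exact h1
      rw [hd.deriv]
      have := sinle y hy.le
      nlinarith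
  have := mono (Set.self_mem_Ici) (Set.mem_Ici.2 hx) hx
  simp only [Real.cos_zero] at this
  nlinarith [this]

theorem cos_diff_lower_bound (φ : ℝ) (h0 : 0 ≤ φ) (h1 : φ ≤ 1) :
    Real.cos φ - Real.cos (2 * φ) ≥ 3 / 2 * φ ^ 2 - 5 / 8 * φ ^ 4 := by
  have hu := cos_le_quartic φ h0
  have hl := sextic_le_cos φ h0
  have hp6 : φ ^ 6 ≤ 1 := pow_le_one₀ h0 h1
  have hp2 : φ ^ 2 ≤ 1 := pow_le_one₀ h0 h1
  have hc0 : 0 ≤ Real.cos φ := by nlinarith [hl, sq_nonneg φ, sq_nonneg (φ^2)]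
  have hdouble : Real.cos (2 * φ) = 2 * Real.cos φ ^ 2 - 1 := Real.cos_two_mul φ
  rw [hdouble]
  have hsq : 2 * Real.cos φ ^ 2 ≤ 2 * (1 - φ ^ 2 / 2 + φ ^ 4 / 24) ^ 2 := by
    nlinarith [mul_nonneg (by linarith : (0:ℝ) ≤ 1 - φ ^ 2 / 2 + φ ^ 4 / 24 - Real.cos φ)
      (by nlinarith : (0:ℝ) ≤ 1 - φ ^ 2 / 2 + φ ^ 4 / 24 + Real.cos φ)]
  have h8 : φ ^ 8 ≤ φ ^ 6 := by
    calc φ ^ 8 = φ ^ 6 * φ ^ 2 := by ring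
    _ ≤ φ ^ 6 * 1 := by nlinarith [pow_nonneg h0 6]
    _ = φ ^ 6 := by ring
  nlinarith [hsq, hl, pow_nonneg h0 6]
end
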